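/- Let U and V be subspaces of E with U ≠ 0. Then the gap δ(U,V) = sup{ dist(u, V) : u ∈ U, ‖u‖ = 1 } satisfies δ(U,V) = ‖P_{V⊥} ∘ P_U‖ = ‖P_U − P_V ∘ P_U‖ = ‖P_U − P_U ∘ P_V‖. -/

import Mathlib

open Module Submodule

noncomputable section

variable {E : Type*} [NormedAddCommGroup E] [InnerProductSpace ℝ E] [FiniteDimensional ℝ E]

/-- The orthogonal projection onto a subspace `U`, viewed as a continuous linear
endomorphism of `E`. -/
noncomputable def projCLM (U : Submodule ℝ E) : E →L[ℝ] E :=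
  U.subtypeL.comp (orthogonalProjection U)

/-- The gap `δ(U,V) := ‖P_U - P_V ∘ P_U‖` between two subspaces. -/
noncomputable def gap (U V : Submodule ℝ E) : ℝ :=
  ‖projCLM U - (projCLM V).comp (projCLM U)‖

lemma projCLM_orthogonal (V : Submodule ℝ E) :
    projCLM Vᗮ = ContinuousLinearMap.id ℝ E - projCLM V := by
  have h : ContinuousLinearMap.id ℝ E = V.subtypeL.comp (orthogonalProjection V) +
      Vᗮ.subtypeL.comp (orthogonalProjection Vᗮ) :=
    id_eq_sum_starProjection_self_orthogonalComplement (K := V)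
  rw [projCLM, projCLM]
  rw [h]; abel

lemma projCLM_apply (U : Submodule ℝ E) (x : E) :
    projCLM U x = orthogonalProjection U x := rfl

lemma projCLM_eq_self {U : Submodule ℝ E} {u : E} (hu : u ∈ U) : projCLM U u = u :=
  starProjection_eq_self_iff.mpr hu

lemma projCLM_mem (U : Submodule ℝ E) (x : E) : projCLM U x ∈ U :=
  (orthogonalProjection U x).2

lemma infDist_eq (V : Submodule ℝ E) (u : E) :
    Metric.infDist u (V : Set E) = ‖projCLM Vᗮ u‖ := by
  have h1 : Metric.infDist u (V : Set E) = ⨅ y : V, ‖u - y‖ := by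
    rw [Metric.infDist_eq_iInf]
    congr 1; ext y; rw [dist_eq_norm]
  rw [h1, ← starProjection_minimal]
  exact congrArg norm (starProjection_orthogonal_val u).symm

/-- For `U ≠ 0`, the gap `δ(U,V) = sup { dist(u,V) : u ∈ U, ‖u‖ = 1 }` satisfies
`δ(U,V) = ‖P_{V⊥} ∘ P_U‖ = ‖P_U - P_V ∘ P_U‖ = ‖P_U - P_U ∘ P_V‖`. -/
theorem gap_eq_opNorm (U V : Submodule ℝ E) (hU : U ≠ ⊥) :
    sSup {r : ℝ | ∃ u ∈ (U : Set E), ‖u‖ = 1 ∧ r = Metric.infDist u (V : Set E)}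
        = ‖(projCLM Vᗮ).comp (projCLM U)‖ ∧
      ‖(projCLM Vᗮ).comp (projCLM U)‖ = ‖projCLM U - (projCLM V).comp (projCLM U)‖ ∧
      ‖projCLM U - (projCLM V).comp (projCLM U)‖
        = ‖projCLM U - (projCLM U).comp (projCLM V)‖ := by
  set S := {r : ℝ | ∃ u ∈ (U : Set E), ‖u‖ = 1 ∧ r = Metric.infDist u (V : Set E)} with hS
  set T := (projCLM Vᗮ).comp (projCLM U) with hT
  -- basic facts
  have hne : S.Nonempty := by
    obtain ⟨x, hxU, hx0⟩ := Submodule.exists_mem_ne_zero_of_ne_bot hU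
    refine ⟨Metric.infDist (‖x‖⁻¹ • x) (V : Set E), ‖x‖⁻¹ • x, ?_, ?_, rfl⟩
    · exact Submodule.smul_mem _ _ hxU
    · rw [norm_smul, norm_inv, norm_norm, inv_mul_cancel₀ (norm_ne_zero_iff.mpr hx0)]
  have key : ∀ u ∈ (U : Set E), Metric.infDist u (V : Set E) = ‖T u‖ := by
    intro u hu
    rw [infDist_eq]
    have : T u = projCLM Vᗮ u := by
      simp only [hT, ContinuousLinearMap.comp_apply, projCLM_eq_self hu]
    rw [this]
  have hbdd : BddAbove S := by
    refine ⟨1, fun r hr => ?_⟩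
    obtain ⟨u, hu, hnorm, rfl⟩ := hr
    calc Metric.infDist u (V : Set E) ≤ dist u 0 :=
          Metric.infDist_le_dist_of_mem (Submodule.zero_mem V)
      _ = 1 := by rw [dist_zero_right, hnorm]
  have hsup_nonneg : 0 ≤ sSup S := by
    obtain ⟨r, hr⟩ := hne
    refine le_trans ?_ (le_csSup hbdd hr)
    obtain ⟨u, _, _, rfl⟩ := hr
    exact Metric.infDist_nonneg
  have hPU_norm : ∀ x : E, ‖projCLM U x‖ ≤ ‖x‖ := by
    intro x
    calc ‖projCLM U x‖ = ‖orthogonalProjection U x‖ := rfl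
      _ ≤ ‖orthogonalProjection U‖ * ‖x‖ := (orthogonalProjection U).le_opNorm x
      _ ≤ 1 * ‖x‖ :=
          mul_le_mul_of_nonneg_right (orthogonalProjection_norm_le U) (norm_nonneg x)
      _ = ‖x‖ := one_mul _
  -- first equality
  have h1 : sSup S = ‖T‖ := by
    apply le_antisymm
    · apply Real.sSup_le _ (norm_nonneg T)
      intro r hr
      obtain ⟨u, hu, hnorm, rfl⟩ := hr
      rw [key u hu]
      calc ‖T u‖ ≤ ‖T‖ * ‖u‖ := T.le_opNorm u
        _ = ‖T‖ := by rw [hnorm, mul_one]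
    · apply ContinuousLinearMap.opNorm_le_bound _ hsup_nonneg
      intro x
      by_cases hx : projCLM U x = 0
      · have : T x = 0 := by
          simp [hT, ContinuousLinearMap.comp_apply, hx]
        rw [this, norm_zero]
        positivity
      · set u := ‖projCLM U x‖⁻¹ • projCLM U x with hu
        have hun : ‖u‖ = 1 := by
          rw [hu, norm_smul, norm_inv, norm_norm,
            inv_mul_cancel₀ (norm_ne_zero_iff.mpr hx)]
        have huU : u ∈ (U : Set E) := by
          apply Submodule.smul_mem
          exact coe_mem _
        have hTu : ‖T u‖ ≤ sSup S := by
          rw [← key u huU]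
          exact le_csSup hbdd ⟨u, huU, hun, rfl⟩
        have hTx : T x = projCLM Vᗮ (projCLM U x) := rfl
        have hTucalc : T u = ‖projCLM U x‖⁻¹ • T x := by
          have h5 : projCLM U u = ‖projCLM U x‖⁻¹ • projCLM U x := by
            rw [hu, map_smul, projCLM_eq_self (projCLM_mem U x)]
          simp only [hT, ContinuousLinearMap.comp_apply, h5, map_smul]
        have : ‖T x‖ = ‖projCLM U x‖ * ‖T u‖ := by
          rw [hTucalc, norm_smul, norm_inv, norm_norm, ← mul_assoc,
            mul_inv_cancel₀ (norm_ne_zero_iff.mpr hx), one_mul]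
        rw [this]
        calc ‖projCLM U x‖ * ‖T u‖ ≤ ‖x‖ * sSup S := by
              apply mul_le_mul (hPU_norm x) hTu (norm_nonneg _) (norm_nonneg _)
          _ = sSup S * ‖x‖ := mul_comm _ _
  -- second equality
  have h2 : T = projCLM U - (projCLM V).comp (projCLM U) := by
    rw [hT, projCLM_orthogonal, ContinuousLinearMap.sub_comp,
      ContinuousLinearMap.id_comp]
  -- third equality: adjoint
  have hsaU : IsSelfAdjoint (projCLM U) := isSelfAdjoint_starProjection U
  have hsaV : IsSelfAdjoint (projCLM V) := isSelfAdjoint_starProjection V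
  have h3 : ContinuousLinearMap.adjoint (projCLM U - (projCLM V).comp (projCLM U))
      = projCLM U - (projCLM U).comp (projCLM V) := by
    rw [map_sub, ContinuousLinearMap.adjoint_comp, hsaU.adjoint_eq, hsaV.adjoint_eq]
  refine ⟨by rw [h1], by rw [h2], ?_⟩
  rw [← h3]
  exact (LinearIsometryEquiv.norm_map (ContinuousLinearMap.adjoint :
    (E →L[ℝ] E) ≃ₗᵢ⋆[ℝ] (E →L[ℝ] E)) _).symm
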